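/- There exists a shift-compact set B ⊆ ℝ containing no subset similar to {1,2,3}: B is shift-compact, and there are no m ≠ 0 and c ∈ ℝ with {m + c, 2m + c, 3m + c} ⊆ B. (Hence B is not in the class Emb.) -/
import Mathlib


open Filter Topology Set Cardinal

/-- `A ⊆ ℝ` is shift-compact: for every null sequence `z_n → 0` there are `a ∈ A` and
an infinite `M ⊆ ℕ` with `a + z_m ∈ A` for all `m ∈ M`. -/
def ShiftCompact (A : Set ℝ) : Prop :=
  ∀ z : ℕ → ℝ, Tendsto z atTop (𝓝 0) →
    ∃ a ∈ A, ∃ M : Set ℕ, M.Infinite ∧ ∀ m ∈ M, a + z m ∈ A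

/-- No nontrivial 3-term arithmetic progression. -/
def APF (A : Set ℝ) : Prop :=
  ∀ x ∈ A, ∀ y ∈ A, ∀ w ∈ A, x + w = 2 * y → x = y

lemma APF.no_similar {B : Set ℝ} (h : APF B) :
    ¬ ∃ m c : ℝ, m ≠ 0 ∧ ({m + c, 2 * m + c, 3 * m + c} : Set ℝ) ⊆ B := by
  rintro ⟨m, c, hm, hsub⟩
  have h1 : (m + c) ∈ B := hsub (by simp)
  have h2 : (2 * m + c) ∈ B := hsub (by simp)
  have h3 : (3 * m + c) ∈ B := hsub (by simp)
  have := h _ h1 _ h2 _ h3 (by ring)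
  apply hm; linarith

/-- Core extension lemma: a small AP-free set stays AP-free after adding a translate
of a countable AP-free set, for a suitable translation. -/
lemma core_ext (S T : Set ℝ) (hS : #S < Cardinal.continuum) (hT : T.Countable)
    (hSf : APF S) (hTf : APF T) :
    ∃ a : ℝ, APF (S ∪ (fun t => a + t) '' T) := by
  classical
  set X : Set (ℝ × ℝ × ℝ × ℝ) := S ×ˢ S ×ˢ T ×ˢ T with hX
  set g1 : ℝ × ℝ × ℝ × ℝ → ℝ := fun p => p.1 - 2 * p.2.2.1 + p.2.2.2 with hg1
  set g2 : ℝ × ℝ × ℝ × ℝ → ℝ := fun p => p.1 - (p.2.2.1 + p.2.2.2) / 2 with hg2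
  set g3 : ℝ × ℝ × ℝ × ℝ → ℝ := fun p => 2 * p.1 - p.2.1 - p.2.2.1 with hg3
  set g4 : ℝ × ℝ × ℝ × ℝ → ℝ := fun p => (p.1 + p.2.1) / 2 - p.2.2.1 with hg4
  set E : Set ℝ := {a | ∃ p ∈ X, a = g1 p ∨ a = g2 p ∨ a = g3 p ∨ a = g4 p} with hE
  have hXcard : #X < Cardinal.continuum := by
    have hTc : #T ≤ ℵ₀ := hT.le_aleph0
    have hTlt : #T < Cardinal.continuum := hTc.trans_lt aleph0_lt_continuum
    have e1 : #X = #S * (#S * (#T * #T)) := by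
      rw [hX]
      rw [mk_congr (Equiv.Set.prod _ _), Cardinal.mk_prod, Cardinal.lift_id, Cardinal.lift_id]
      rw [mk_congr (Equiv.Set.prod _ _), Cardinal.mk_prod, Cardinal.lift_id, Cardinal.lift_id]
      rw [mk_congr (Equiv.Set.prod _ _), Cardinal.mk_prod]
      simp [Cardinal.lift_id]
    rw [e1]
    exact mul_lt_of_lt aleph0_le_continuum hS
      (mul_lt_of_lt aleph0_le_continuum hS
        (mul_lt_of_lt aleph0_le_continuum hTlt hTlt))
  have hEcard : #E < Cardinal.continuum := by
    have hsub : E ⊆ g1 '' X ∪ g2 '' X ∪ g3 '' X ∪ g4 '' X := by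
      rintro a ⟨p, hp, h | h | h | h⟩
      · exact Or.inl (Or.inl (Or.inl ⟨p, hp, h.symm⟩))
      · exact Or.inl (Or.inl (Or.inr ⟨p, hp, h.symm⟩))
      · exact Or.inl (Or.inr ⟨p, hp, h.symm⟩)
      · exact Or.inr ⟨p, hp, h.symm⟩
    refine lt_of_le_of_lt (mk_le_mk_of_subset hsub) ?_
    have him : ∀ g : ℝ × ℝ × ℝ × ℝ → ℝ, #(g '' X) < Cardinal.continuum := fun g =>
      lt_of_le_of_lt mk_image_le hXcard
    refine lt_of_le_of_lt (mk_union_le _ _) (add_lt_of_lt aleph0_le_continuum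
      (lt_of_le_of_lt (mk_union_le _ _) (add_lt_of_lt aleph0_le_continuum
        (lt_of_le_of_lt (mk_union_le _ _) (add_lt_of_lt aleph0_le_continuum
          (him g1) (him g2))) (him g3))) (him g4))
  obtain ⟨a, ha⟩ : ∃ a : ℝ, a ∉ E := by
    by_contra hcon
    push_neg at hcon
    have heq : E = Set.univ := Set.eq_univ_of_forall hcon
    rw [heq, mk_univ, mk_real] at hEcard
    exact lt_irrefl _ hEcard
  have haX : ∀ s ∈ S, ∀ s' ∈ S, ∀ t ∈ T, ∀ t' ∈ T,
      a ≠ s - 2 * t + t' ∧ a ≠ s - (t + t') / 2 ∧ a ≠ 2 * s - s' - t ∧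
        a ≠ (s + s') / 2 - t := by
    intro s hs s' hs' t ht t' ht'
    have hpX : ((s, s', t, t') : ℝ × ℝ × ℝ × ℝ) ∈ X := ⟨hs, hs', ht, ht'⟩
    refine ⟨fun h => ha ⟨_, hpX, Or.inl (by simpa [hg1] using h)⟩,
      fun h => ha ⟨_, hpX, Or.inr (Or.inl (by simpa [hg2] using h))⟩,
      fun h => ha ⟨_, hpX, Or.inr (Or.inr (Or.inl (by simpa [hg3] using h)))⟩,
      fun h => ha ⟨_, hpX, Or.inr (Or.inr (Or.inr (by simpa [hg4] using h)))⟩⟩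
  refine ⟨a, ?_⟩
  intro x hx y hy w hw hsum
  rcases hx with hx | ⟨tx, htx, rfl⟩ <;> rcases hy with hy | ⟨ty, hty, rfl⟩ <;>
    rcases hw with hw | ⟨tw, htw, rfl⟩
  · exact hSf _ hx _ hy _ hw hsum
  · dsimp only at hsum
    exact absurd (by linarith : a = 2 * y - x - tw) (haX y hy x hx tw htw tw htw).2.2.1
  · dsimp only at hsum
    exact absurd (by linarith : a = (x + w) / 2 - ty) (haX x hx w hw ty hty ty hty).2.2.2
  · dsimp only at hsum
    exact absurd (by linarith : a = x - 2 * ty + tw) (haX x hx x hx ty hty tw htw).1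
  · dsimp only at hsum
    exact absurd (by linarith : a = 2 * y - w - tx) (haX y hy w hw tx htx tx htx).2.2.1
  · dsimp only at hsum
    exact absurd (by linarith : a = y - (tx + tw) / 2) (haX y hy y hy tx htx tw htw).2.1
  · dsimp only at hsum
    exact absurd (by linarith : a = w - 2 * ty + tx) (haX w hw w hw ty hty tx htx).1
  · dsimp only at hsum ⊢
    have h8 : tx = ty := hTf _ htx _ hty _ htw (by linarith)
    rw [h8]

/-- From every null sequence we can extract an infinite index set whose values,
together with `0`, form an AP-free set. -/
lemma seq_choice (z : ℕ → ℝ) (hz : Tendsto z atTop (𝓝 0)) :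
    ∃ M : Set ℕ, M.Infinite ∧ APF (insert 0 (z '' M)) := by
  classical
  by_cases hzero : {m | z m = 0}.Infinite
  · refine ⟨{m | z m = 0}, hzero, ?_⟩
    have himg : insert (0:ℝ) (z '' {m | z m = 0}) = {0} := by
      apply Set.Subset.antisymm
      · rintro x (rfl | ⟨m, hm, rfl⟩)
        · rfl
        · exact hm
      · rintro x rfl
        exact Set.mem_insert _ _
    rw [himg]
    intro x hx y hy w hw _
    rw [Set.mem_singleton_iff] at hx hy
    rw [hx, hy]
  · have hcof : {m | z m ≠ 0}.Infinite := by
      have hfin : {m | z m = 0}.Finite := Set.not_infinite.mp hzero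
      have := hfin.infinite_compl
      simpa [Set.compl_setOf] using this
    have hstep : ∀ n : ℕ, ∀ ε : ℝ, 0 < ε → ∃ m, n < m ∧ z m ≠ 0 ∧ |z m| < ε := by
      intro n ε hε
      obtain ⟨N, hN⟩ := Metric.tendsto_atTop.mp hz ε hε
      obtain ⟨m, hm, hmgt⟩ := hcof.exists_gt (max n N)
      refine ⟨m, lt_of_le_of_lt (le_max_left _ _) hmgt, hm, ?_⟩
      have := hN m (le_of_lt (lt_of_le_of_lt (le_max_right _ _) hmgt))
      simpa [Real.dist_eq] using this
    obtain ⟨n0, hn0⟩ := hcof.nonempty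
    have hstep2 : ∀ n : ℕ, z n ≠ 0 → ∃ m, n < m ∧ z m ≠ 0 ∧ |z m| < |z n| / 4 := by
      intro n hn
      exact hstep n (|z n| / 4) (by positivity)
    choose fnext h1 h2 h3 using hstep2
    let g : ℕ → {n : ℕ // z n ≠ 0} := fun k =>
      Nat.rec ⟨n0, hn0⟩ (fun _ p => ⟨fnext p.1 p.2, h2 p.1 p.2⟩) k
    let φ : ℕ → ℕ := fun k => (g k).1
    have hφne : ∀ k, z (φ k) ≠ 0 := fun k => (g k).2
    have hφmono : ∀ k, φ k < φ (k + 1) := fun k => h1 (g k).1 (g k).2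
    have hφdec : ∀ k, |z (φ (k + 1))| < |z (φ k)| / 4 := fun k => h3 (g k).1 (g k).2
    set t : ℕ → ℝ := fun k => z (φ k) with ht
    have ht0 : ∀ k, t k ≠ 0 := hφne
    have habspos : ∀ k, 0 < |t k| := fun k => abs_pos.2 (ht0 k)
    have hanti : StrictAnti fun k => |t k| := by
      apply strictAnti_nat_of_succ_lt
      intro k
      have := hφdec k
      have h4 := abs_nonneg (t k)
      simp only [ht]
      linarith
    have hquart : ∀ i k, i < k → |t k| < |t i| / 4 := by
      intro i k h
      exact lt_of_le_of_lt (hanti.antitone (Nat.succ_le_of_lt h)) (hφdec i)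
    have hinj : ∀ i j, |t i| = |t j| → i = j := fun i j h => hanti.injective h
    have key : ∀ i j k, i < k → i ≠ j → k ≠ j → t i + t k = 2 * t j → False := by
      intro i j k hik hij hkj heq
      have habsum : |t i + t k| = 2 * |t j| := by rw [heq, abs_mul, abs_two]
      rcases lt_or_gt_of_ne hij with hij' | hij'
      · have hq1 := hquart i j hij'
        have hq2 := hquart i k hik
        have h3' : |t i| ≤ |t i + t k| + |t k| := by
          have := abs_add_le (t i + t k) (-(t k))
          simpa using this
        linarith [habspos i]
      · have hq1 := hquart j i hij'
        have hq2 := hquart j k (hij'.trans hik)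
        have h3' := abs_add_le (t i) (t k)
        linarith [habspos j]
    refine ⟨Set.range φ, Set.infinite_range_of_injective
      (strictMono_nat_of_lt_succ hφmono).injective, ?_⟩
    have hmem : ∀ x ∈ insert (0:ℝ) (z '' Set.range φ), x = 0 ∨ ∃ k, x = t k := by
      rintro x (rfl | ⟨u, ⟨k, rfl⟩, rfl⟩)
      · exact Or.inl rfl
      · exact Or.inr ⟨k, rfl⟩
    intro x hx y hy w hw hsum
    rcases hmem x hx with rfl | ⟨i, rfl⟩ <;> rcases hmem y hy with rfl | ⟨j, rfl⟩ <;>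
      rcases hmem w hw with rfl | ⟨k, rfl⟩
    · rfl
    · exact absurd (by linarith : t k = 0) (ht0 k)
    · exact absurd (by linarith : t j = 0) (ht0 j)
    · -- t k = 2 t j
      by_cases hjk : k = j
      · subst hjk
        exact absurd (by linarith : t k = 0) (ht0 k)
      · have habseq : |t k| = 2 * |t j| := by
          rw [(by linarith : t k = 2 * t j), abs_mul, abs_two]
        exfalso
        rcases lt_or_gt_of_ne hjk with h | h
        · have h9 := hquart k j h
          have h10 := habspos j
          linarith
        · have h9 := hquart j k h
          have h10 := habspos j
          linarith
    · exact absurd (by linarith : t i = 0) (ht0 i)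
    · -- t i + t k = 0
      by_cases hik : i = k
      · subst hik
        exact absurd (by linarith : t i = 0) (ht0 i)
      · have : |t k| = |t i| := by
          rw [(by linarith : t k = -(t i)), abs_neg]
        exact absurd (hinj k i this).symm hik
    · -- t i = 2 t j
      by_cases hij : i = j
      · subst hij
        exact absurd (by linarith : t i = 0) (ht0 i)
      · have habseq : |t i| = 2 * |t j| := by
          rw [(by linarith : t i = 2 * t j), abs_mul, abs_two]
        exfalso
        rcases lt_or_gt_of_ne hij with h | h
        · have h9 := hquart i j h
          have h10 := habspos i
          linarith
        · have h9 := hquart j i h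
          have h10 := habspos j
          linarith
    · -- t i + t k = 2 t j
      by_cases hij : i = j
      · rw [hij]
      · have hkj : k ≠ j := by
          intro h
          subst h
          have h5 : t i = t k := by linarith
          exact hij (hinj i k (by rw [h5]))
        have hik : i ≠ k := by
          intro h
          subst h
          have h5 : t i = t j := by linarith
          exact hij (hinj i j (by rw [h5]))
        rcases lt_or_gt_of_ne hik with h | h
        · exact (key i j k h hij hkj (by linarith)).elim
        · exact (key k j i h hkj hij (by linarith)).elim

/-- The "block" added for a null sequence `z`, from the chosen translate `p.1`
and index set `p.2`. -/
def blockOf (z : ℕ → ℝ) (p : ℝ × Set ℕ) : Set ℝ :=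
  (fun t => p.1 + t) '' insert 0 (z '' p.2)

lemma blockOf_countable (z : ℕ → ℝ) (p : ℝ × Set ℕ) : (blockOf z p).Countable :=
  (((p.2.to_countable).image z).insert 0).image _

lemma step_ex (S : Set ℝ) (hcard : #S < Cardinal.continuum) (hS : APF S) (z : ℕ → ℝ)
    (hz : Tendsto z atTop (𝓝 0)) :
    ∃ p : ℝ × Set ℕ, p.2.Infinite ∧ APF (S ∪ blockOf z p) := by
  obtain ⟨M, hM, hT⟩ := seq_choice z hz
  have hTc : (insert (0:ℝ) (z '' M)).Countable := ((M.to_countable).image z).insert 0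
  obtain ⟨a, ha⟩ := core_ext S _ hcard hTc hS hT
  exact ⟨(a, M), hM, ha⟩

/-- Index type: the initial ordinal of the continuum. -/
abbrev II : Type := (Cardinal.continuum).ord.ToType

noncomputable instance : LinearOrder II := inferInstance

instance : IsWellOrder II (· < ·) := isWellOrder_lt

lemma mk_Iio_II (i : II) : #(Set.Iio i) < Cardinal.continuum := by
  have h1 : Ordinal.typein ((· < ·) : II → II → Prop) i < Cardinal.continuum.ord :=
    Ordinal.typein_lt_self i
  rw [Cardinal.lt_ord] at h1
  have h2 : #(Set.Iio i) = (Ordinal.typein ((· < ·) : II → II → Prop) i).card :=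
    Ordinal.card_typein (r := ((· < ·) : II → II → Prop)) i
  rwa [h2]

open Classical in
noncomputable def pickP (z : ℕ → ℝ) (S : Set ℝ) : ℝ × Set ℕ :=
  if h : ∃ p : ℝ × Set ℕ, p.2.Infinite ∧ APF (S ∪ blockOf z p) then h.choose else (0, ∅)

lemma pickP_spec {z : ℕ → ℝ} {S : Set ℝ}
    (h : ∃ p : ℝ × Set ℕ, p.2.Infinite ∧ APF (S ∪ blockOf z p)) :
    (pickP z S).2.Infinite ∧ APF (S ∪ blockOf z (pickP z S)) := by
  unfold pickP
  rw [dif_pos h]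
  exact h.choose_spec

noncomputable def seqF (f : II → ℕ → ℝ) : II → ℝ × Set ℕ :=
  (IsWellFounded.wf (α := II) (r := (· < ·))).fix
    (fun i rec => pickP (f i) (⋃ j, ⋃ h : j < i, blockOf (f j) (rec j h)))

lemma seqF_eq (f : II → ℕ → ℝ) (i : II) :
    seqF f i = pickP (f i) (⋃ j, ⋃ _ : j < i, blockOf (f j) (seqF f j)) :=
  WellFounded.fix_eq _ _ _

noncomputable def Blk (f : II → ℕ → ℝ) (i : II) : Set ℝ := blockOf (f i) (seqF f i)

def PrevU (f : II → ℕ → ℝ) (i : II) : Set ℝ := ⋃ j, ⋃ _ : j < i, Blk f j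

def UptoU (f : II → ℕ → ℝ) (i : II) : Set ℝ := ⋃ j, ⋃ _ : j ≤ i, Blk f j

lemma Blk_subset_Upto (f : II → ℕ → ℝ) {k j : II} (h : k ≤ j) : Blk f k ⊆ UptoU f j :=
  fun x hx => Set.mem_iUnion.2 ⟨k, Set.mem_iUnion.2 ⟨h, hx⟩⟩

lemma inv_main (f : II → ℕ → ℝ) (hf : ∀ i, Tendsto (f i) atTop (𝓝 0)) (i : II) :
    (seqF f i).2.Infinite ∧ APF (UptoU f i) ∧ #(UptoU f i) < Cardinal.continuum := by
  induction i using WellFoundedLT.induction with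
  | _ i IH =>
  have hPrevAPF : APF (PrevU f i) := by
    intro x hx y hy w hw hsum
    simp only [PrevU, Set.mem_iUnion] at hx hy hw
    obtain ⟨j1, hj1, hx⟩ := hx
    obtain ⟨j2, hj2, hy⟩ := hy
    obtain ⟨j3, hj3, hw⟩ := hw
    have hjlt : max j1 (max j2 j3) < i := max_lt hj1 (max_lt hj2 hj3)
    refine (IH _ hjlt).2.1 x ?_ y ?_ w ?_ hsum
    · exact Blk_subset_Upto f (le_max_left _ _) hx
    · exact Blk_subset_Upto f ((le_max_left _ _).trans (le_max_right _ _)) hy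
    · exact Blk_subset_Upto f ((le_max_right _ _).trans (le_max_right _ _)) hw
  have hPrevCard : #(PrevU f i) < Cardinal.continuum := by
    have hrw : PrevU f i = ⋃ j : Set.Iio i, Blk f j := by
      apply Set.Subset.antisymm
      · intro x hx
        simp only [PrevU, Set.mem_iUnion] at hx
        obtain ⟨j, hj, hx⟩ := hx
        exact Set.mem_iUnion.2 ⟨⟨j, hj⟩, hx⟩
      · intro x hx
        obtain ⟨⟨j, hj⟩, hx⟩ := Set.mem_iUnion.1 hx
        exact Set.mem_iUnion.2 ⟨j, Set.mem_iUnion.2 ⟨hj, hx⟩⟩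
    rw [hrw]
    refine lt_of_le_of_lt mk_iUnion_le_sum_mk ?_
    refine lt_of_le_of_lt (Cardinal.sum_le_sum _ (fun _ => ℵ₀) ?_) ?_
    · intro j
      exact (blockOf_countable _ _).le_aleph0
    · rw [Cardinal.sum_const']
      exact mul_lt_of_lt aleph0_le_continuum (mk_Iio_II i) aleph0_lt_continuum
  have hex := step_ex (PrevU f i) hPrevCard hPrevAPF (f i) (hf i)
  have hspec := pickP_spec hex
  have hseq : seqF f i = pickP (f i) (PrevU f i) := seqF_eq f i
  rw [← hseq] at hspec
  have hUpto : UptoU f i = PrevU f i ∪ Blk f i := by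
    ext x
    simp only [UptoU, PrevU, Set.mem_iUnion, Set.mem_union]
    constructor
    · rintro ⟨j, hj, hx⟩
      rcases lt_or_eq_of_le hj with h | h
      · exact Or.inl ⟨j, h, hx⟩
      · subst h; exact Or.inr hx
    · rintro (⟨j, hj, hx⟩ | hx)
      · exact ⟨j, le_of_lt hj, hx⟩
      · exact ⟨i, le_rfl, hx⟩
  refine ⟨hspec.1, ?_, ?_⟩
  · rw [hUpto]
    exact hspec.2
  · rw [hUpto]
    refine lt_of_le_of_lt (mk_union_le _ _) (add_lt_of_lt aleph0_le_continuum hPrevCard ?_)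
    exact (blockOf_countable _ _).le_aleph0.trans_lt aleph0_lt_continuum

/-- **Theorem 3(ii), Part 2.** There is a shift-compact set `B ⊆ ℝ` containing no
subset similar to `{1,2,3}` (so `B ∉ Emb`). -/
theorem SC_not_subset_Emb :
    ∃ B : Set ℝ, ShiftCompact B ∧
      ¬ ∃ m c : ℝ, m ≠ 0 ∧ ({m + c, 2 * m + c, 3 * m + c} : Set ℝ) ⊆ B := by
  classical
  set Z := {z : ℕ → ℝ // Tendsto z atTop (𝓝 0)} with hZdef
  have hZcard : #Z ≤ #II := by
    rw [Cardinal.mk_toType, Cardinal.card_ord]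
    calc #Z ≤ #(ℕ → ℝ) := mk_subtype_le _
      _ = Cardinal.continuum := by
        rw [mk_arrow, mk_real, mk_nat, Cardinal.lift_id, Cardinal.lift_id,
          Cardinal.continuum_power_aleph0]
  haveI : Nonempty Z := ⟨⟨fun _ => 0, tendsto_const_nhds⟩⟩
  obtain ⟨emb⟩ := Cardinal.le_def Z II |>.mp hZcard
  set f0 : II → Z := Function.invFun emb with hf0def
  have hf0 : Function.Surjective f0 := Function.invFun_surjective emb.injective
  set f : II → ℕ → ℝ := fun i => (f0 i).1 with hfdef
  have hf : ∀ i, Tendsto (f i) atTop (𝓝 0) := fun i => (f0 i).2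
  refine ⟨⋃ i, Blk f i, ?_, ?_⟩
  · intro z hz
    obtain ⟨i, hi⟩ := hf0 ⟨z, hz⟩
    have hfi : f i = z := by rw [hfdef]; simp only; rw [hi]
    refine ⟨(seqF f i).1, ?_, (seqF f i).2, (inv_main f hf i).1, ?_⟩
    · refine Set.mem_iUnion.2 ⟨i, ?_⟩
      exact ⟨0, Set.mem_insert _ _, add_zero _⟩
    · intro m hm
      refine Set.mem_iUnion.2 ⟨i, ?_⟩
      refine ⟨z m, ?_, rfl⟩
      rw [← hfi]
      exact Set.mem_insert_of_mem _ ⟨m, hm, rfl⟩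
  · have hAPF : APF (⋃ i, Blk f i) := by
      intro x hx y hy w hw hsum
      obtain ⟨i1, hx⟩ := Set.mem_iUnion.1 hx
      obtain ⟨i2, hy⟩ := Set.mem_iUnion.1 hy
      obtain ⟨i3, hw⟩ := Set.mem_iUnion.1 hw
      refine (inv_main f hf (max i1 (max i2 i3))).2.1 x ?_ y ?_ w ?_ hsum
      · exact Blk_subset_Upto f (le_max_left _ _) hx
      · exact Blk_subset_Upto f ((le_max_left _ _).trans (le_max_right _ _)) hy
      · exact Blk_subset_Upto f ((le_max_right _ _).trans (le_max_right _ _)) hw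
    exact hAPF.no_similar
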